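/- arXiv:2208.02766 — 3 statements merged into one kernel-verified Lean document; each statement's English description precedes it below -/
import Mathlib

section
/- Merging two voters with identical preference orders is safe: if voters v₁ and v₂ satisfy util_{v₁}(p) > util_{v₁}(p') ↔ util_{v₂}(p) > util_{v₂}(p') for all items p, p' (identical preference orders), and we replace them by a single voter v₁₂ with util_{v₁₂}(p) = util_{v₁}(p) + util_{v₂}(p), then for every bundle Z ⊆ P the total λ-median satisfaction in the new instance equals the total λ-median satisfaction in the original instance. Consequently, a bundle of cost at most b with total satisfaction at least u_tgt exists in one instance iff it exists in the other. -/
/-- The λ-median satisfaction of a voter with utility function `util` from a bundle `Z`: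
the λ-th largest utility (with multiplicity) among items of `Z`, or `0` if `|Z| < λ`. -/
def medSat {P : Type*} (util : P → ℕ) (lam : ℕ) (Z : Finset P) : ℕ :=
  if 1 ≤ lam ∧ lam ≤ Z.card then ((Z.val.map util).sort (· ≤ ·)).getD (Z.card - lam) 0
  else 0

lemma sort_map_eq {P : Type*} (u : P → ℕ) (Z : Finset P) (l : List P)
    (hperm : l.Perm Z.val.toList)
    (hsorted : (l.map u).Pairwise (· ≤ ·)) :
    ((Z.val.map u).sort (· ≤ ·)) = l.map u := by
  refine List.Perm.eq_of_pairwise' (Multiset.pairwise_sort _ _) hsorted ?_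
  rw [← Multiset.coe_eq_coe, Multiset.sort_eq]
  have h1 : (↑l : Multiset P) = Z.val := by
    rw [Multiset.coe_eq_coe.2 hperm, Multiset.coe_toList]
  rw [← h1, Multiset.map_coe]

/-- Merging two voters `v₁, v₂` with identical preference orders into one voter with
utility `u₁ + u₂` preserves, for every bundle, the total λ-median satisfaction; hence a
budget-feasible bundle reaching the target exists in one instance iff in the other
(the remaining voters `W` are unchanged). -/
theorem stmt2 {P W : Type*} [Fintype P] [Fintype W]
    (c : P → ℕ) (u₁ u₂ : P → ℕ) (utilW : W → P → ℕ) (lam b tgt : ℕ)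
    (hsame : ∀ p p', u₁ p > u₁ p' ↔ u₂ p > u₂ p') :
    (∀ Z : Finset P,
      medSat u₁ lam Z + medSat u₂ lam Z = medSat (fun p => u₁ p + u₂ p) lam Z) ∧
    ((∃ Z : Finset P, (∑ q ∈ Z, c q) ≤ b ∧
        tgt ≤ (∑ w : W, medSat (utilW w) lam Z) + (medSat u₁ lam Z + medSat u₂ lam Z)) ↔
      (∃ Z : Finset P, (∑ q ∈ Z, c q) ≤ b ∧
        tgt ≤ (∑ w : W, medSat (utilW w) lam Z) + medSat (fun p => u₁ p + u₂ p) lam Z)) := by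
  have key : ∀ Z : Finset P,
      medSat u₁ lam Z + medSat u₂ lam Z = medSat (fun p => u₁ p + u₂ p) lam Z := by
    intro Z
    unfold medSat
    by_cases h : 1 ≤ lam ∧ lam ≤ Z.card
    · simp only [h, if_true, and_self]
      -- sort Z by u₁
      classical
      set r : P → P → Prop := fun p q => u₁ p ≤ u₁ q with hr
      haveI : DecidableRel r := fun p q => by unfold r; infer_instance
      haveI : Std.Total r := ⟨fun p q => le_total (u₁ p) (u₁ q)⟩
      haveI : IsTrans P r := ⟨fun p q s h1 h2 => le_trans h1 h2⟩
      set l : List P := Z.val.toList.insertionSort r with hl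
      have hperm : l.Perm Z.val.toList := List.perm_insertionSort r _
      have hsortr : l.Pairwise r := List.pairwise_insertionSort r _
      have himp : ∀ p q, r p q → u₂ p ≤ u₂ q := by
        intro p q hpq
        by_contra hc
        exact absurd ((hsame p q).2 (lt_of_not_ge hc)) (not_lt.2 hpq)
      have hs1 : (l.map u₁).Pairwise (· ≤ ·) := by
        rw [List.pairwise_map]; exact hsortr
      have hs2 : (l.map u₂).Pairwise (· ≤ ·) := by
        rw [List.pairwise_map]
        exact hsortr.imp (fun h => himp _ _ h)
      have hs12 : (l.map (fun p => u₁ p + u₂ p)).Pairwise (· ≤ ·) := by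
        rw [List.pairwise_map]
        exact hsortr.imp (fun h => Nat.add_le_add h (himp _ _ h))
      rw [sort_map_eq u₁ Z l hperm hs1, sort_map_eq u₂ Z l hperm hs2,
        sort_map_eq _ Z l hperm hs12]
      have hlen : l.length = Z.card := by
        rw [hperm.length_eq, Multiset.length_toList]; rfl
      have hk : Z.card - lam < l.length := by
        rw [hlen]
        exact Nat.sub_lt (lt_of_lt_of_le h.1 h.2) h.1
      rw [List.getD_eq_getElem _ _ (by simpa using hk),
        List.getD_eq_getElem _ _ (by simpa using hk),
        List.getD_eq_getElem _ _ (by simpa using hk)]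
      simp
    · simp [h]
  refine ⟨key, ?_⟩
  constructor
  · rintro ⟨Z, hb, ht⟩
    exact ⟨Z, hb, by rw [← key Z]; exact ht⟩
  · rintro ⟨Z, hb, ht⟩
    exact ⟨Z, hb, by rw [key Z]; exact ht⟩
end

section
/- The reduction from Diverse Knapsack to Knapsack Cover is correct: the Diverse Knapsack instance has a bundle S ⊆ P of cost at most b with ∑_{v∈V} max_{p∈S} util_v(p) ≥ u_tgt if and only if the Knapsack Cover instance (with U₁ = V, U₂ = P, family of all pairs {X, r} for X ⊆ V, r ∈ P, cost({X,r}) = c(r), profit({X,r}) = ∑_{v∈X} util_v(r)) has a subfamily Z of pairwise-disjoint first components whose first components union to V, of total cost at most b, and total profit at least u_tgt. -/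
/-- Correctness of the reduction from Diverse Knapsack to Knapsack Cover: there is a bundle
`S ⊆ P` of cost at most `b` with `∑_v max_{p∈S} util_v(p) ≥ u_tgt` iff there is a family
`Z` of pairs `(X, r)` (`X ⊆ V`, `r ∈ P`) with pairwise-disjoint first components covering
all of `V`, total cost `∑ c(r) ≤ b`, and total profit `∑_{(X,r)∈Z} ∑_{v∈X} util_v(r) ≥ u_tgt`. -/
theorem stmt8 {P V : Type*} [Fintype P] [Fintype V] [DecidableEq P] [DecidableEq V]
    [Nonempty V] (c : P → ℕ) (util : V → P → ℕ) (b tgt : ℕ) (htgt : 0 < tgt) :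
    (∃ S : Finset P, (∑ p ∈ S, c p) ≤ b ∧ tgt ≤ ∑ v : V, S.sup (util v)) ↔
    (∃ Z : Finset (Finset V × P),
      (∀ z₁ ∈ Z, ∀ z₂ ∈ Z, z₁ ≠ z₂ → Disjoint z₁.1 z₂.1) ∧
      (∀ v : V, ∃ z ∈ Z, v ∈ z.1) ∧
      (∑ z ∈ Z, c z.2) ≤ b ∧
      tgt ≤ ∑ z ∈ Z, ∑ v ∈ z.1, util v z.2) := by
  constructor
  · rintro ⟨S, hcost, hprof⟩
    -- S is nonempty since tgt > 0
    have hS : S.Nonempty := by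
      by_contra h
      rw [Finset.not_nonempty_iff_eq_empty] at h
      subst h
      simp at hprof
      omega
    -- for each voter choose an item achieving the sup
    have hch : ∀ v : V, ∃ p ∈ S, S.sup (util v) = util v p := fun v =>
      Finset.exists_mem_eq_sup S hS (util v)
    choose ch hchS hchv using hch
    refine ⟨S.image (fun p => (Finset.univ.filter (fun v => ch v = p), p)), ?_, ?_, ?_, ?_⟩
    · intro z₁ hz₁ z₂ hz₂ hne
      simp only [Finset.mem_image] at hz₁ hz₂
      obtain ⟨p₁, _, rfl⟩ := hz₁
      obtain ⟨p₂, _, rfl⟩ := hz₂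
      have hp : p₁ ≠ p₂ := fun h => hne (by simp [h])
      rw [Finset.disjoint_left]
      intro v h1 h2
      simp only [Finset.mem_filter] at h1 h2
      exact hp (h1.2 ▸ h2.2)
    · intro v
      exact ⟨_, Finset.mem_image_of_mem _ (hchS v), by simp⟩
    · rw [Finset.sum_image (by intro p₁ _ p₂ _ h; exact (Prod.ext_iff.mp h).2)]
      exact hcost
    · rw [Finset.sum_image (by intro p₁ _ p₂ _ h; exact (Prod.ext_iff.mp h).2)]
      calc tgt ≤ ∑ v : V, S.sup (util v) := hprof
        _ = ∑ v : V, util v (ch v) := by simp_rw [hchv]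
        _ = ∑ p ∈ S, ∑ v ∈ Finset.univ.filter (fun v => ch v = p), util v (ch v) :=
            (Finset.sum_fiberwise_of_maps_to (fun v _ => hchS v) _).symm
        _ = ∑ p ∈ S, ∑ v ∈ Finset.univ.filter (fun v => ch v = p), util v p := by
            refine Finset.sum_congr rfl fun p _ => Finset.sum_congr rfl fun v hv => ?_
            rw [Finset.mem_filter] at hv
            rw [hv.2]
  · rintro ⟨Z, hdisj, hcover, hcost, hprof⟩
    have key : ∑ p ∈ Z.image Prod.snd, c p ≤ ∑ z ∈ Z, c z.2 := by
      rw [← Finset.sum_fiberwise_of_maps_to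
        (fun z hz => Finset.mem_image_of_mem Prod.snd hz) (fun z => c z.2)]
      refine Finset.sum_le_sum fun p hp => ?_
      obtain ⟨z, hz, rfl⟩ := Finset.mem_image.mp hp
      exact Finset.single_le_sum (f := fun z' : Finset V × P => c z'.2)
        (fun i _ => Nat.zero_le _) (Finset.mem_filter.mpr ⟨hz, rfl⟩)
    refine ⟨Z.image Prod.snd, le_trans key hcost, ?_⟩
    calc tgt ≤ ∑ z ∈ Z, ∑ v ∈ z.1, util v z.2 := hprof
      _ ≤ ∑ z ∈ Z, ∑ v ∈ z.1, (Z.image Prod.snd).sup (util v) := by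
          refine Finset.sum_le_sum fun z hz => Finset.sum_le_sum fun v _ => ?_
          exact Finset.le_sup (Finset.mem_image_of_mem _ hz)
      _ = ∑ v ∈ Z.biUnion Prod.fst, (Z.image Prod.snd).sup (util v) :=
          (Finset.sum_biUnion (fun z₁ h₁ z₂ h₂ hne => hdisj z₁ h₁ z₂ h₂ hne)).symm
      _ ≤ ∑ v : V, (Z.image Prod.snd).sup (util v) :=
          Finset.sum_le_sum_of_subset (Finset.subset_univ _)
end

section
/- FPTAS approximation lemma: let 0 < ε ≤ 1, let u_max = max over voters v and items p of util_v(p) > 0, and suppose s is a positive integer with u_max = 2ns/ε (n = |V|). Define ũ_v(p) = s·⌈util_v(p)/s⌉. Let S* be a bundle of cost at most b maximizing ũ(S*) := ∑_v max_{p∈S*} ũ_v(p) over all bundles of cost at most b. Then for every bundle S of cost at most b, util(S) ≤ (1+ε)·util(S*), where util(T) = ∑_v max_{p∈T} util_v(p). -/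
/-- FPTAS approximation lemma: let `0 < ε ≤ 1`, `u_max > 0` the maximum utility (attained,
and every item attaining it is affordable), `s` a positive integer with `u_max = 2ns/ε`
(`n = |V|`), and `ũ_v(p) = s·⌈util_v(p)/s⌉`. If `S*` is a budget-feasible bundle maximizing
the rounded total satisfaction `∑_v max_{p∈S*} ũ_v(p)`, then every budget-feasible bundle
`S` satisfies `util(S) ≤ (1+ε)·util(S*)`. -/
theorem stmt13 {P V : Type*} [Fintype P] [Fintype V] [Nonempty V]
    (c : P → ℕ) (util : V → P → ℕ) (b : ℕ)
    (ε : ℚ) (hε0 : 0 < ε) (hε1 : ε ≤ 1)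
    (s : ℕ) (hs : 0 < s) (umax : ℕ) (humaxpos : 0 < umax)
    (humax : ∀ v p, util v p ≤ umax) (humax' : ∃ v p, util v p = umax)
    (hus : (umax : ℚ) = 2 * (Fintype.card V) * s / ε)
    (haff : ∀ p : P, (∃ v, util v p = umax) → c p ≤ b)
    (Sstar : Finset P) (hS0 : Sstar.Nonempty) (hSc : (∑ p ∈ Sstar, c p) ≤ b)
    (hopt : ∀ T : Finset P, T.Nonempty → (∑ p ∈ T, c p) ≤ b →
      (∑ v : V, T.sup fun p => s * ⌈(util v p : ℚ) / s⌉₊) ≤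
        ∑ v : V, Sstar.sup fun p => s * ⌈(util v p : ℚ) / s⌉₊) :
    ∀ S : Finset P, S.Nonempty → (∑ p ∈ S, c p) ≤ b →
      ((∑ v : V, S.sup (util v) : ℕ) : ℚ) ≤
        (1 + ε) * ((∑ v : V, Sstar.sup (util v) : ℕ) : ℚ) := by
  intro S hS hScost
  have hsq : (0 : ℚ) < s := by exact_mod_cast hs
  -- pointwise lower bound: util ≤ rounded util
  have key1 : ∀ v p, util v p ≤ s * ⌈(util v p : ℚ) / s⌉₊ := by
    intro v p
    have h := Nat.le_ceil ((util v p : ℚ) / s)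
    rw [div_le_iff₀ hsq] at h
    have : (util v p : ℚ) ≤ (s : ℚ) * ⌈(util v p : ℚ) / s⌉₊ := by
      rw [mul_comm]; exact h
    exact_mod_cast this
  -- pointwise upper bound: rounded util ≤ util + s
  have key2 : ∀ v p, s * ⌈(util v p : ℚ) / s⌉₊ ≤ util v p + s := by
    intro v p
    have h : (⌈(util v p : ℚ) / s⌉₊ : ℚ) < (util v p : ℚ) / s + 1 :=
      Nat.ceil_lt_add_one (by positivity)
    have h2 : (s : ℚ) * ⌈(util v p : ℚ) / s⌉₊ < (util v p : ℚ) + s := by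
      have := mul_lt_mul_of_pos_left h hsq
      rw [mul_add, mul_one, mul_div_cancel₀ _ (ne_of_gt hsq)] at this
      exact this
    have : (s : ℚ) * ⌈(util v p : ℚ) / s⌉₊ ≤ (util v p : ℚ) + s := le_of_lt h2
    exact_mod_cast this
  set n := Fintype.card V with hn
  -- chain in ℕ
  have H_A : (∑ v : V, S.sup (util v)) ≤
      ∑ v : V, S.sup fun p => s * ⌈(util v p : ℚ) / s⌉₊ :=
    Finset.sum_le_sum fun v _ => Finset.sup_mono_fun fun p _ => key1 v p
  have H_opt := hopt S hS hScost
  have H_B : (∑ v : V, Sstar.sup fun p => s * ⌈(util v p : ℚ) / s⌉₊) ≤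
      (∑ v : V, Sstar.sup (util v)) + n * s := by
    calc (∑ v : V, Sstar.sup fun p => s * ⌈(util v p : ℚ) / s⌉₊)
        ≤ ∑ v : V, (Sstar.sup (util v) + s) := by
          refine Finset.sum_le_sum fun v _ => Finset.sup_le fun p hp => ?_
          exact (key2 v p).trans (add_le_add_left (Finset.le_sup hp) s)
      _ = (∑ v : V, Sstar.sup (util v)) + n * s := by
          rw [Finset.sum_add_distrib, Finset.sum_const, smul_eq_mul, hn]
          rfl
  obtain ⟨v', p', hvp⟩ := humax'
  have H_umax : umax ≤ ∑ v : V, Sstar.sup fun p => s * ⌈(util v p : ℚ) / s⌉₊ := by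
    have hT := hopt {p'} (Finset.singleton_nonempty p')
      (by simpa using haff p' ⟨v', hvp⟩)
    refine le_trans ?_ hT
    have h1 : umax ≤ ({p'} : Finset P).sup fun p => s * ⌈(util v' p : ℚ) / s⌉₊ := by
      rw [Finset.sup_singleton]
      calc umax = util v' p' := hvp.symm
        _ ≤ _ := key1 v' p'
    exact h1.trans (Finset.single_le_sum (f := fun v => ({p'} : Finset P).sup fun p => s * ⌈(util v p : ℚ) / s⌉₊) (fun v _ => Nat.zero_le _) (Finset.mem_univ v'))
  -- move to ℚ
  have hA : ((∑ v : V, S.sup (util v) : ℕ) : ℚ) ≤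
      ((∑ v : V, Sstar.sup (util v) : ℕ) : ℚ) + (n : ℚ) * s := by
    have : (∑ v : V, S.sup (util v)) ≤ (∑ v : V, Sstar.sup (util v)) + n * s :=
      (H_A.trans H_opt).trans H_B
    exact_mod_cast this
  have hU : (umax : ℚ) ≤ ((∑ v : V, Sstar.sup (util v) : ℕ) : ℚ) + (n : ℚ) * s := by
    have : umax ≤ (∑ v : V, Sstar.sup (util v)) + n * s := H_umax.trans H_B
    exact_mod_cast this
  have hns : ε * (umax : ℚ) = 2 * n * s := by
    field_simp at hus
    linarith [hus]
  set U : ℚ := ((∑ v : V, Sstar.sup (util v) : ℕ) : ℚ) with hUdef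
  have hU0 : (0 : ℚ) ≤ U := by positivity
  have hns0 : (0 : ℚ) ≤ (n : ℚ) * s := by positivity
  nlinarith [mul_le_mul_of_nonneg_left hU hε0.le, mul_le_mul_of_nonneg_right hε1 hns0]
end
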